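/- arXiv:2603.25939 — 2 statements merged into one kernel-verified Lean document; each statement's English description precedes it below -/
import Mathlib

section
/- C₋₁(H) is a closed two-sided module over the C*-algebra C₁(H): if A ∈ C₁(H) and B ∈ C₋₁(H), then AB ∈ C₋₁(H) and BA ∈ C₋₁(H), and C₋₁(H) is norm-closed. -/
open ContinuousLinearMap Filter Topology

/-- `C₋₁(H)` is a norm-closed two-sided module over the C*-algebra `C₁(H)`:
if `A ∈ C₁(H)` and `B ∈ C₋₁(H)` then `AB, BA ∈ C₋₁(H)`, and `C₋₁(H)` is closed. -/
theorem Cminus1_closed_twoSided_module {n : ℕ}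
    {H : Type*} [NormedAddCommGroup H] [InnerProductSpace ℂ H] [CompleteSpace H]
    (W : EuclideanSpace ℝ (Fin (2 * n)) → (H →L[ℂ] H))
    (σ : EuclideanSpace ℝ (Fin (2 * n)) →ₗ[ℝ] EuclideanSpace ℝ (Fin (2 * n)) →ₗ[ℝ] ℝ)
    (hW_unitary : ∀ z, W z * ContinuousLinearMap.adjoint (W z) = 1 ∧
      ContinuousLinearMap.adjoint (W z) * W z = 1)
    (hW_adj : ∀ z, ContinuousLinearMap.adjoint (W z) = W (-z))
    (hCCR : ∀ z w, W z * W w = Complex.exp (-Complex.I * (σ z w : ℝ) / 2) • W (z + w)) :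
    (∀ A ∈ {A : H →L[ℂ] H |
        Tendsto (fun z => ‖W z * A * ContinuousLinearMap.adjoint (W z) - A‖)
          (𝓝 (0 : EuclideanSpace ℝ (Fin (2 * n)))) (𝓝 0)},
      ∀ B ∈ {B : H →L[ℂ] H | Tendsto (fun z => ‖W z * B * W z - B‖)
          (𝓝 (0 : EuclideanSpace ℝ (Fin (2 * n)))) (𝓝 0)},
        A * B ∈ {B : H →L[ℂ] H | Tendsto (fun z => ‖W z * B * W z - B‖)
            (𝓝 (0 : EuclideanSpace ℝ (Fin (2 * n)))) (𝓝 0)} ∧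
        B * A ∈ {B : H →L[ℂ] H | Tendsto (fun z => ‖W z * B * W z - B‖)
            (𝓝 (0 : EuclideanSpace ℝ (Fin (2 * n)))) (𝓝 0)}) ∧
    IsClosed {B : H →L[ℂ] H | Tendsto (fun z => ‖W z * B * W z - B‖)
        (𝓝 (0 : EuclideanSpace ℝ (Fin (2 * n)))) (𝓝 0)} := by
  -- norm bounds
  have hU : ∀ z, ‖W z‖ ≤ 1 := by
    intro z
    have h1 : ContinuousLinearMap.adjoint (W z) * W z = 1 := (hW_unitary z).2
    have h2 : ‖ContinuousLinearMap.adjoint (W z) * W z‖ = ‖W z‖ * ‖W z‖ := by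
      rw [← ContinuousLinearMap.star_eq_adjoint]
      exact CStarRing.norm_star_mul_self
    rw [h1] at h2
    have h3 : ‖(1 : H →L[ℂ] H)‖ ≤ 1 := by
      rw [ContinuousLinearMap.one_def]; exact ContinuousLinearMap.norm_id_le
    nlinarith [norm_nonneg (W z)]
  have hU' : ∀ z, ‖ContinuousLinearMap.adjoint (W z)‖ ≤ 1 := fun z => by
    rw [hW_adj]; exact hU _
  have hmul3 : ∀ (U V X : H →L[ℂ] H), ‖U‖ ≤ 1 → ‖V‖ ≤ 1 → ‖U * X * V‖ ≤ ‖X‖ := by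
    intro U V X hUle hVle
    have t1 : ‖U * X * V‖ ≤ ‖U * X‖ * ‖V‖ := norm_mul_le _ _
    have t2 : ‖U * X‖ ≤ ‖U‖ * ‖X‖ := norm_mul_le _ _
    nlinarith [norm_nonneg X, norm_nonneg (U * X), norm_nonneg U, norm_nonneg V]
  refine ⟨fun A hA B hB => ?_, ?_⟩
  · simp only [Set.mem_setOf_eq] at hA hB ⊢
    constructor
    · -- A * B
      have hid : ∀ z, W z * (A * B) * W z - A * B =
          (W z * A * ContinuousLinearMap.adjoint (W z) - A) * (W z * B * W z)
            + A * (W z * B * W z - B) := by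
        intro z
        have h1 : ContinuousLinearMap.adjoint (W z) * W z = 1 := (hW_unitary z).2
        have key : W z * A * ContinuousLinearMap.adjoint (W z) * (W z * B * W z)
            = W z * (A * B) * W z := by
          calc W z * A * ContinuousLinearMap.adjoint (W z) * (W z * B * W z)
              = W z * A * ((ContinuousLinearMap.adjoint (W z) * W z) * (B * W z)) := by
                noncomm_ring
            _ = W z * (A * B) * W z := by rw [h1]; noncomm_ring
        rw [sub_mul, mul_sub, key]; abel
      refine squeeze_zero (fun z => norm_nonneg _)
        (g := fun z => ‖W z * A * ContinuousLinearMap.adjoint (W z) - A‖ * ‖B‖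
          + ‖A‖ * ‖W z * B * W z - B‖) ?_ ?_
      · intro z
        rw [hid z]
        refine le_trans (norm_add_le _ _) ?_
        have t1 : ‖(W z * A * ContinuousLinearMap.adjoint (W z) - A) * (W z * B * W z)‖
            ≤ ‖W z * A * ContinuousLinearMap.adjoint (W z) - A‖ * ‖B‖ :=
          le_trans (norm_mul_le _ _)
            (mul_le_mul_of_nonneg_left (hmul3 _ _ _ (hU z) (hU z)) (norm_nonneg _))
        have t2 : ‖A * (W z * B * W z - B)‖ ≤ ‖A‖ * ‖W z * B * W z - B‖ := norm_mul_le _ _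
        linarith
      · simpa using (hA.mul_const ‖B‖).add (hB.const_mul ‖A‖)
    · -- B * A
      have hA' : Tendsto
          (fun z => ‖ContinuousLinearMap.adjoint (W z) * A * W z - A‖)
          (𝓝 (0 : EuclideanSpace ℝ (Fin (2 * n)))) (𝓝 0) := by
        have hneg : Tendsto (fun z : EuclideanSpace ℝ (Fin (2 * n)) => -z)
            (𝓝 0) (𝓝 0) := by simpa using (continuous_neg.tendsto (0 : EuclideanSpace ℝ (Fin (2 * n))))
        have := hA.comp hneg
        refine this.congr fun z => ?_
        simp only [Function.comp]
        rw [hW_adj z, hW_adj (-z), neg_neg]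
      have hid : ∀ z, W z * (B * A) * W z - B * A =
          (W z * B * W z - B) * (ContinuousLinearMap.adjoint (W z) * A * W z)
            + B * (ContinuousLinearMap.adjoint (W z) * A * W z - A) := by
        intro z
        have h1 : W z * ContinuousLinearMap.adjoint (W z) = 1 := (hW_unitary z).1
        have key : W z * B * W z * (ContinuousLinearMap.adjoint (W z) * A * W z)
            = W z * (B * A) * W z := by
          calc W z * B * W z * (ContinuousLinearMap.adjoint (W z) * A * W z)
              = W z * B * ((W z * ContinuousLinearMap.adjoint (W z)) * (A * W z)) := by
                noncomm_ring
            _ = W z * (B * A) * W z := by rw [h1]; noncomm_ring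
        rw [sub_mul, mul_sub, key]; abel
      refine squeeze_zero (fun z => norm_nonneg _)
        (g := fun z => ‖W z * B * W z - B‖ * ‖A‖
          + ‖B‖ * ‖ContinuousLinearMap.adjoint (W z) * A * W z - A‖) ?_ ?_
      · intro z
        rw [hid z]
        refine le_trans (norm_add_le _ _) ?_
        have t1 : ‖(W z * B * W z - B) * (ContinuousLinearMap.adjoint (W z) * A * W z)‖
            ≤ ‖W z * B * W z - B‖ * ‖A‖ :=
          le_trans (norm_mul_le _ _)
            (mul_le_mul_of_nonneg_left (hmul3 _ _ _ (hU' z) (hU z)) (norm_nonneg _))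
        have t2 : ‖B * (ContinuousLinearMap.adjoint (W z) * A * W z - A)‖
            ≤ ‖B‖ * ‖ContinuousLinearMap.adjoint (W z) * A * W z - A‖ := norm_mul_le _ _
        linarith
      · simpa using (hB.mul_const ‖A‖).add (hA'.const_mul ‖B‖)
  · -- closedness
    refine isClosed_of_closure_subset ?_
    intro B hB
    simp only [Set.mem_setOf_eq]
    rw [Metric.tendsto_nhds]
    intro ε hε
    obtain ⟨C, hC, hBC⟩ := Metric.mem_closure_iff.mp hB (ε / 3) (by positivity)
    simp only [Set.mem_setOf_eq] at hC
    have hC' := Metric.tendsto_nhds.mp hC (ε / 3) (by positivity)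
    filter_upwards [hC'] with z hz
    have hBCnorm : ‖B - C‖ < ε / 3 := by rwa [dist_eq_norm] at hBC
    have hzn : ‖W z * C * W z - C‖ < ε / 3 := by
      rw [Real.dist_eq, sub_zero, abs_of_nonneg (norm_nonneg _)] at hz
      exact hz
    have hid : W z * B * W z - B =
        W z * (B - C) * W z + (W z * C * W z - C) + (C - B) := by
      noncomm_ring
    rw [Real.dist_eq, sub_zero, abs_of_nonneg (norm_nonneg _), hid]
    have t1 : ‖W z * (B - C) * W z‖ ≤ ‖B - C‖ := hmul3 _ _ _ (hU z) (hU z)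
    have t2 : ‖C - B‖ = ‖B - C‖ := norm_sub_rev _ _
    calc ‖W z * (B - C) * W z + (W z * C * W z - C) + (C - B)‖
        ≤ ‖W z * (B - C) * W z + (W z * C * W z - C)‖ + ‖C - B‖ := norm_add_le _ _
      _ ≤ ‖W z * (B - C) * W z‖ + ‖W z * C * W z - C‖ + ‖C - B‖ := by
          have := norm_add_le (W z * (B - C) * W z) (W z * C * W z - C); linarith
      _ < ε := by rw [t2]; linarith
end

section
/- Let X be a finite-dimensional inner product space, V₁,…,V_d ⊆ X subspaces, and f₁,…,f_d : X → [0,∞) functions such that for each j, sup_{w ∈ Vⱼ^⊥} fⱼ(v + w) → 0 as |v| → ∞ with v ∈ Vⱼ. Let f = min_j fⱼ and V = V₁ + ⋯ + V_d. Then sup_{w ∈ V^⊥} f(v + w) → 0 as |v| → ∞ with v ∈ V. -/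
/-- If each `fⱼ` decays uniformly over `Vⱼ^⊥` as `|v| → ∞` in `Vⱼ`, then
`f = min_j fⱼ` decays uniformly over `V^⊥` as `|v| → ∞` in `V = V₁ + ⋯ + V_d`. -/
theorem min_decay_on_sum_of_subspaces
    {X : Type*} [NormedAddCommGroup X] [InnerProductSpace ℝ X] [FiniteDimensional ℝ X]
    {d : ℕ} (hd : 0 < d) (V : Fin d → Submodule ℝ X) (f : Fin d → X → ℝ)
    (hf_nonneg : ∀ j x, 0 ≤ f j x)
    (hf : ∀ j, ∀ ε > (0 : ℝ), ∃ R : ℝ, ∀ v ∈ V j, R < ‖v‖ →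
      ∀ w ∈ (V j)ᗮ, f j (v + w) < ε) :
    ∀ ε > (0 : ℝ), ∃ R : ℝ, ∀ v ∈ (⨆ j, V j), R < ‖v‖ →
      ∀ w ∈ (⨆ j, V j)ᗮ, (⨅ j, f j (v + w)) < ε := by
  haveI : Nonempty (Fin d) := ⟨⟨0, hd⟩⟩
  intro ε hε
  set S : Submodule ℝ X := ⨆ j, V j with hS
  -- the map v ↦ (orthogonal projections onto each V j)
  set T : S →ₗ[ℝ] (Fin d → X) :=
    LinearMap.pi (fun j => (V j).subtype ∘ₗ (Submodule.orthogonalProjectionOnto (V j)).toLinearMap ∘ₗ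
      S.subtype) with hT
  have hTinj : Function.Injective T := by
    rw [← LinearMap.ker_eq_bot]
    rw [LinearMap.ker_eq_bot']
    intro m hm
    have h1 : ∀ j, (m : X) ∈ (V j)ᗮ := by
      intro j
      have := congrFun hm j
      simp only [hT, LinearMap.pi_apply, LinearMap.coe_comp, Function.comp_apply,
        Submodule.coe_subtype, ContinuousLinearMap.coe_coe, Pi.zero_apply] at this
      have h0 : Submodule.orthogonalProjectionOnto (V j) (m : X) = 0 := by
        exact_mod_cast Subtype.ext (by simpa using this)
      exact Submodule.orthogonalProjectionOnto_eq_zero_iff.mp h0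
    have h2 : (m : X) ∈ Sᗮ := by
      show (m : X) ∈ (⨆ j, V j)ᗮ
      rw [← Submodule.iInf_orthogonal]
      exact Submodule.mem_iInf _ |>.mpr h1
    have := Submodule.inf_orthogonal_eq_bot S
    have h3 : (m : X) ∈ S ⊓ Sᗮ := ⟨m.2, h2⟩
    rw [this] at h3
    exact Subtype.ext (by simpa using h3)
  obtain ⟨K, hK0, hK⟩ := (LinearMap.injective_iff_antilipschitz T).mp hTinj
  -- choose R j for each j
  choose R hR using fun j => hf j ε hε
  obtain ⟨R₀, hR₀⟩ := Finset.exists_le (Finset.univ.image R)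
  set R₁ : ℝ := max R₀ 0 with hR₁
  refine ⟨(K : ℝ) * R₁, ?_⟩
  intro v hv hvR w hw
  set vS : S := ⟨v, hv⟩
  have hanti := hK.le_mul_dist vS 0
  simp only [map_zero, dist_zero_right] at hanti
  have hTvnorm : R₁ < ‖T vS‖ := by
    have hKpos : (0 : ℝ) < K := by exact_mod_cast hK0
    have : (K : ℝ) * R₁ < K * ‖T vS‖ := lt_of_lt_of_le hvR (by simpa using hanti)
    exact lt_of_mul_lt_mul_left this hKpos.le
  -- find j with large projection
  have hR₁0 : 0 ≤ R₁ := le_max_right _ _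
  have hex : ∃ j, R₁ < ‖(T vS) j‖ := by
    by_contra h
    push_neg at h
    exact absurd ((pi_norm_le_iff_of_nonneg hR₁0).mpr h) (not_le.mpr hTvnorm)
  obtain ⟨j, hj⟩ := hex
  have hTj : (T vS) j = (Submodule.orthogonalProjectionOnto (V j) v : X) := by
    simp [hT]; rfl
  set p : X := (Submodule.orthogonalProjectionOnto (V j) v : X) with hp
  have hpmem : p ∈ V j := (Submodule.orthogonalProjectionOnto (V j) v).2
  have hRj : R j < ‖p‖ := by
    have : R j ≤ R₁ := le_trans (hR₀ _ (Finset.mem_image_of_mem R (Finset.mem_univ j))) (le_max_left _ _)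
    rw [hTj] at hj
    exact lt_of_le_of_lt this hj
  have hwj : (v - p) + w ∈ (V j)ᗮ := by
    refine Submodule.add_mem _ (Submodule.sub_starProjection_mem_orthogonal (K := V j) v) ?_
    exact Submodule.orthogonal_le (le_iSup V j) hw
  have hfj : f j (v + w) < ε := by
    have := hR j p hpmem hRj ((v - p) + w) hwj
    rwa [show p + ((v - p) + w) = v + w by abel] at this
  refine lt_of_le_of_lt ?_ hfj
  exact ciInf_le_of_le ⟨0, fun x ⟨i, hi⟩ => hi ▸ hf_nonneg i _⟩ j le_rfl
end
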